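/- For every nonnegative integer n, ∑_{i=0}^{n} (2i+2)²·[Γ(n-i-1/2)/Γ(n-i+1)]·[Γ(n+i+3/2)/Γ(n+i+3)] = -2π. -/

import Mathlib

open Finset Real

noncomputable def Bc (k : ℕ) : ℝ := (Nat.centralBinom k : ℝ)

lemma Bc_succ (k : ℕ) : ((k:ℝ)+1) * Bc (k+1) = 2*(2*k+1) * Bc k := by
  unfold Bc
  have h := Nat.succ_mul_centralBinom_succ k
  have h2 : ((k+1) * Nat.centralBinom (k+1) : ℝ) = (2 * (2*k+1) * Nat.centralBinom k : ℝ) := by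
    exact_mod_cast congrArg (Nat.cast : ℕ → ℝ) h
  push_cast at h2 ⊢
  linarith

lemma refl_sum (n : ℕ) (f : ℕ → ℝ) :
    ∑ k ∈ range (n+1), f k = ∑ k ∈ range (n+1), f (n - k) := by
  have := Finset.sum_range_reflect f (n+1)
  simpa using this.symm

-- weighted reflection: ∑ (k:ℝ)-weight
lemma weighted_refl (n : ℕ) (g : ℕ → ℝ) (hg : ∀ k ∈ range (n+1), g k = g (n-k)) :
    2 * ∑ k ∈ range (n+1), (k:ℝ) * g k = (n:ℝ) * ∑ k ∈ range (n+1), g k := by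
  have h1 : ∑ k ∈ range (n+1), (k:ℝ) * g k
      = ∑ k ∈ range (n+1), ((n:ℝ) - k) * g k := by
    rw [refl_sum n (fun k => (k:ℝ) * g k)]
    apply Finset.sum_congr rfl
    intro k hk
    have hk' : k ≤ n := Nat.lt_succ_iff.mp (Finset.mem_range.mp hk)
    rw [Nat.cast_sub hk', hg k hk]
  have h2 : ∑ k ∈ range (n+1), ((n:ℝ) - k) * g k
      = (n:ℝ) * (∑ k ∈ range (n+1), g k) - ∑ k ∈ range (n+1), (k:ℝ) * g k := by
    rw [Finset.mul_sum, ← Finset.sum_sub_distrib]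
    apply Finset.sum_congr rfl
    intro k _
    ring
  linarith [h1, h2]

lemma Pstep (n : ℕ) :
    ∑ k ∈ range (n+2), Bc k * Bc (n+1-k) = 4 * ∑ k ∈ range (n+1), Bc k * Bc (n-k) := by
  set P0 : ℝ := ∑ k ∈ range (n+1), Bc k * Bc (n-k) with hP0
  set P1 : ℝ := ∑ k ∈ range (n+2), Bc k * Bc (n+1-k) with hP1
  -- W0 := ∑_{k∈range(n+1)} k * Bc k * Bc (n-k)
  set W0 : ℝ := ∑ k ∈ range (n+1), (k:ℝ) * (Bc k * Bc (n-k)) with hW0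
  set W1 : ℝ := ∑ k ∈ range (n+2), (k:ℝ) * (Bc k * Bc (n+1-k)) with hW1
  have sym0 : ∀ k ∈ range (n+1), Bc k * Bc (n-k) = Bc (n-k) * Bc (n-(n-k)) := by
    intro k hk
    have hk' : k ≤ n := Nat.lt_succ_iff.mp (Finset.mem_range.mp hk)
    rw [Nat.sub_sub_self hk', mul_comm]
  have sym1 : ∀ k ∈ range (n+2), Bc k * Bc (n+1-k) = Bc (n+1-k) * Bc ((n+1)-((n+1)-k)) := by
    intro k hk
    have hk' : k ≤ n+1 := Nat.lt_succ_iff.mp (Finset.mem_range.mp hk)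
    rw [Nat.sub_sub_self hk', mul_comm]
  have hrefl0 : 2 * W0 = (n:ℝ) * P0 := weighted_refl n _ sym0
  have hrefl1 : 2 * W1 = ((n+1:ℕ):ℝ) * P1 := weighted_refl (n+1) _ sym1
  -- key: ∑ (k+1) Bc(k+1) Bc(n-k) = W1
  have key : ∑ k ∈ range (n+1), (((k:ℝ)+1) * Bc (k+1)) * Bc (n-k) = W1 := by
    rw [hW1, Finset.sum_range_succ' (fun j => (j:ℝ) * (Bc j * Bc (n+1-j))) (n+1)]
    norm_num
    apply Finset.sum_congr rfl
    intro k _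
    rw [Nat.succ_sub_succ]
    push_cast
    ring
  -- termwise Bc_succ:
  have key2 : ∑ k ∈ range (n+1), (((k:ℝ)+1) * Bc (k+1)) * Bc (n-k)
      = ∑ k ∈ range (n+1), (2*(2*(k:ℝ)+1)) * (Bc k * Bc (n-k)) := by
    apply Finset.sum_congr rfl
    intro k _
    rw [Bc_succ k]; ring
  have expand : ∑ k ∈ range (n+1), (2*(2*(k:ℝ)+1)) * (Bc k * Bc (n-k))
      = 4 * W0 + 2 * P0 := by
    rw [hW0, hP0, Finset.mul_sum, Finset.mul_sum, ← Finset.sum_add_distrib]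
    apply Finset.sum_congr rfl
    intro k _
    ring
  have h1 : W1 = 4 * W0 + 2 * P0 := by rw [← key, key2, expand]
  push_cast at hrefl1
  nlinarith [hrefl0, hrefl1, h1]

lemma Psum (n : ℕ) : ∑ k ∈ range (n+1), Bc k * Bc (n-k) = 4^n := by
  induction n with
  | zero => simp [Bc, Nat.centralBinom]
  | succ m ih => rw [Pstep m, ih]; ring

noncomputable def Cc (k : ℕ) : ℝ := (catalan k : ℝ)

lemma Cc_to_Bc (k : ℕ) : ((k:ℝ)+1) * Cc k = Bc k := by
  unfold Bc Cc
  exact_mod_cast congrArg (Nat.cast : ℕ → ℝ) (succ_mul_catalan_eq_centralBinom k)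

lemma Vsum (n : ℕ) : ∑ k ∈ range (n+1), Cc k * Cc (n-k) = Cc (n+1) := by
  unfold Cc
  norm_cast
  rw [catalan_succ, ← Finset.sum_range fun i => catalan i * catalan (n - i)]

lemma Wsum (n : ℕ) : 2 * ∑ k ∈ range (n+1), (k:ℝ) * (Cc k * Cc (n-k)) = (n:ℝ) * Cc (n+1) := by
  rw [← Vsum n]
  apply weighted_refl
  intro k hk
  have hk' : k ≤ n := Nat.lt_succ_iff.mp (Finset.mem_range.mp hk)
  rw [Nat.sub_sub_self hk', mul_comm]

lemma Usum (n : ℕ) : 2 * ∑ k ∈ range (n+1), (k:ℝ)^2 * (Cc k * Cc (n-k))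
    = ((n:ℝ)^2+2*n+2) * Cc (n+1) - 2 * 4^n := by
  have hP := Psum n
  -- rewrite Bc k * Bc (n-k) as (k+1)(n-k+1) Cc k Cc (n-k)
  have hterm : ∑ k ∈ range (n+1), Bc k * Bc (n-k)
      = ∑ k ∈ range (n+1), (((n:ℝ)+1)*((k:ℝ)+1) - (k:ℝ)^2 - k) * (Cc k * Cc (n-k)) := by
    apply Finset.sum_congr rfl
    intro k hk
    have hk' : k ≤ n := Nat.lt_succ_iff.mp (Finset.mem_range.mp hk)
    rw [← Cc_to_Bc k, ← Cc_to_Bc (n-k), Nat.cast_sub hk']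
    ring
  have hsplit : ∑ k ∈ range (n+1), (((n:ℝ)+1)*((k:ℝ)+1) - (k:ℝ)^2 - k) * (Cc k * Cc (n-k))
      = ((n:ℝ)+1) * ((∑ k ∈ range (n+1), (k:ℝ) * (Cc k * Cc (n-k)))
          + ∑ k ∈ range (n+1), Cc k * Cc (n-k))
        - (∑ k ∈ range (n+1), (k:ℝ)^2 * (Cc k * Cc (n-k)))
        - ∑ k ∈ range (n+1), (k:ℝ) * (Cc k * Cc (n-k)) := by
    rw [← Finset.sum_add_distrib, Finset.mul_sum, ← Finset.sum_sub_distrib,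
      ← Finset.sum_sub_distrib]
    apply Finset.sum_congr rfl
    intro k _
    ring
  have hV := Vsum n
  have hW := Wsum n
  rw [hterm, hsplit, hV] at hP
  nlinarith [hP, hW]

lemma sum_range_split (a b : ℕ) (f : ℕ → ℝ) :
    ∑ k ∈ range (a+b), f k = ∑ k ∈ range a, f k + ∑ i ∈ range b, f (a+i) := by
  induction b with
  | zero => simp
  | succ m ih =>
      rw [show a + (m+1) = (a+m)+1 by ring, Finset.sum_range_succ, ih,
        Finset.sum_range_succ]
      ring

lemma keysum (n : ℕ) :
    2 * ∑ i ∈ range n, ((i:ℝ)+1)^2 * (Cc (n-1-i) * Cc (n+1+i))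
      = ((n:ℝ)+1)^2 * Cc (2*n+1) - 16^n := by
  set F : ℕ → ℝ := fun k => ((k:ℝ)-n)^2 * (Cc k * Cc (2*n-k)) with hF
  have hU := Usum (2*n)
  have hW := Wsum (2*n)
  have hV := Vsum (2*n)
  -- (a) 2 * ∑_{range(2n+1)} F = 2(n+1)^2 Cc(2n+1) - 2*4^(2n)
  have ha : 2 * ∑ k ∈ range (2*n+1), F k
      = 2*((n:ℝ)+1)^2 * Cc (2*n+1) - 2*4^(2*n) := by
    have hexp : ∑ k ∈ range (2*n+1), F k
        = (∑ k ∈ range (2*n+1), (k:ℝ)^2 * (Cc k * Cc (2*n-k)))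
          - 2*(n:ℝ) * (∑ k ∈ range (2*n+1), (k:ℝ) * (Cc k * Cc (2*n-k)))
          + (n:ℝ)^2 * ∑ k ∈ range (2*n+1), Cc k * Cc (2*n-k) := by
      rw [Finset.mul_sum, Finset.mul_sum, ← Finset.sum_sub_distrib, ← Finset.sum_add_distrib]
      apply Finset.sum_congr rfl
      intro k _
      simp only [hF]
      ring
    rw [hexp, hV]
    push_cast at hU hW ⊢
    nlinarith [hU, hW]
  -- (b) split
  have hb : ∑ k ∈ range (2*n+1), F k
      = ∑ k ∈ range (n+1), F k + ∑ i ∈ range n, F (n+1+i) := by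
    rw [show 2*n+1 = (n+1)+n by ring, sum_range_split]
  -- (c) first part
  have hc : ∑ k ∈ range (n+1), F k
      = ∑ i ∈ range n, ((i:ℝ)+1)^2 * (Cc (n-1-i) * Cc (n+1+i)) := by
    rw [refl_sum n F]
    have hcong : ∀ k ∈ range (n+1), F (n-k) = (k:ℝ)^2 * (Cc (n-k) * Cc (n+k)) := by
      intro k hk
      have hk' : k ≤ n := Nat.lt_succ_iff.mp (Finset.mem_range.mp hk)
      simp only [hF]
      rw [Nat.cast_sub hk', show 2*n-(n-k) = n+k by omega]
      ring
    rw [Finset.sum_congr rfl hcong,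
      Finset.sum_range_succ' (fun k => (k:ℝ)^2 * (Cc (n-k) * Cc (n+k))) n]
    norm_num
    apply Finset.sum_congr rfl
    intro i _
    rw [show n-(i+1) = n-1-i by omega]
    push_cast
    ring
  -- (d) second part
  have hd : ∑ i ∈ range n, F (n+1+i)
      = ∑ i ∈ range n, ((i:ℝ)+1)^2 * (Cc (n-1-i) * Cc (n+1+i)) := by
    apply Finset.sum_congr rfl
    intro i _
    simp only [hF]
    rw [show 2*n-(n+1+i) = n-1-i by omega]
    push_cast
    ring
  rw [hb, hc, hd] at ha
  rw [show ((16:ℝ))^n = 4^(2*n) by rw [pow_mul]; norm_num]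
  linarith [ha]

lemma Gamma_nat_add_half (m : ℕ) :
    Real.Gamma ((m:ℝ) + 1/2) = Real.sqrt π * Nat.factorial (2*m) / (4^m * Nat.factorial m) := by
  induction m with
  | zero => simpa using Real.Gamma_one_half_eq
  | succ k ih =>
      have hne : ((k:ℝ) + 1/2) ≠ 0 := by positivity
      have h1 : ((k+1:ℕ):ℝ) + 1/2 = ((k:ℝ) + 1/2) + 1 := by push_cast; ring
      rw [h1, Real.Gamma_add_one hne, ih]
      have h2 : (Nat.factorial (2*(k+1)) : ℝ) = (2*k+2) * ((2*k+1) * Nat.factorial (2*k)) := by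
        rw [show 2*(k+1) = (2*k+1)+1 by ring, Nat.factorial_succ,
          show 2*k+1 = (2*k)+1 from rfl, Nat.factorial_succ]
        push_cast
        ring
      have h3 : (Nat.factorial (k+1) : ℝ) = (k+1) * Nat.factorial k := by
        rw [Nat.factorial_succ]; push_cast; ring
      rw [h2, h3]
      have hf : (Nat.factorial k : ℝ) ≠ 0 := by positivity
      have h4 : ((4:ℝ))^(k+1) = 4 * 4^k := by ring
      rw [h4]
      field_simp
      ring

lemma Gamma_neg_half : Real.Gamma (-(1/2)) = -2 * Real.sqrt π := by
  have hne : (-(1/2) : ℝ) ≠ 0 := by norm_num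
  have h := Real.Gamma_add_one hne
  rw [show (-(1/2):ℝ) + 1 = 1/2 by norm_num, Real.Gamma_one_half_eq] at h
  linarith [h]

lemma cat_fact (m : ℕ) : (Nat.factorial (2*m) : ℝ) = Cc m * Nat.factorial m * Nat.factorial (m+1) := by
  have h1 : (2*m).choose m * (Nat.factorial m * Nat.factorial m) = Nat.factorial (2*m) := by
    have := Nat.choose_mul_factorial_mul_factorial (show m ≤ 2*m by omega)
    rw [show 2*m-m = m by omega] at this
    rw [← this]; ring
  have h2 : (2*m).choose m = (m+1) * catalan m := by
    rw [← Nat.centralBinom, ← succ_mul_catalan_eq_centralBinom]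
  rw [← h1, h2]
  unfold Cc
  rw [Nat.factorial_succ]
  push_cast
  ring

lemma term_eq (n i : ℕ) (h : i < n) :
    (2 * (i : ℝ) + 2) ^ 2 *
        (Real.Gamma ((n : ℝ) - i - 1/2) / Real.Gamma ((n : ℝ) - i + 1)) *
          (Real.Gamma ((n : ℝ) + i + 3/2) / Real.Gamma ((n : ℝ) + i + 3))
      = π * (4*((i:ℝ)+1)^2 * (Cc (n-1-i) * Cc (n+1+i))) / 16^n := by
  set m := n-1-i with hm
  set M := n+1+i with hM
  have hmn : m + 1 = n - i := by omega
  have hMn : m + M = 2*n := by omega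
  have e1 : (n : ℝ) - i - 1/2 = (m:ℝ) + 1/2 := by
    have : (m:ℝ) = (n:ℝ) - 1 - i := by
      rw [hm]; push_cast [Nat.cast_sub (show 1+i ≤ n by omega)]; ring_nf
      rw [Nat.cast_sub (show i ≤ n-1 by omega), Nat.cast_sub (show 1 ≤ n by omega)]
      ring
    rw [this]; ring
  have e2 : (n : ℝ) - i + 1 = ((n-i:ℕ):ℝ) + 1 := by
    rw [Nat.cast_sub (show i ≤ n by omega)]
  have e3 : (n : ℝ) + i + 3/2 = (M:ℝ) + 1/2 := by
    rw [hM]; push_cast; ring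
  have e4 : (n : ℝ) + i + 3 = ((M+1:ℕ):ℝ) + 1 := by
    rw [hM]; push_cast; ring
  rw [e1, e2, e3, e4, _root_.Gamma_nat_add_half, _root_.Gamma_nat_add_half,
    Real.Gamma_nat_eq_factorial, Real.Gamma_nat_eq_factorial]
  rw [← hmn, cat_fact m, cat_fact M]
  have hsq : Real.sqrt π * Real.sqrt π = π :=
    Real.mul_self_sqrt (le_of_lt Real.pi_pos)
  have hp : (4:ℝ)^m * 4^M = 16^n := by
    rw [← pow_add, hMn, pow_mul]; norm_num
  have f1 : (Nat.factorial m : ℝ) ≠ 0 := by positivity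
  have f2 : (Nat.factorial (m+1) : ℝ) ≠ 0 := by positivity
  have f3 : (Nat.factorial M : ℝ) ≠ 0 := by positivity
  have f4 : (Nat.factorial (M+1) : ℝ) ≠ 0 := by positivity
  have p1 : ((4:ℝ))^m ≠ 0 := by positivity
  have p2 : ((4:ℝ))^M ≠ 0 := by positivity
  have p3 : ((16:ℝ))^n ≠ 0 := by positivity
  field_simp
  rw [← hp]
  ring_nf
  rw [Real.sq_sqrt Real.pi_pos.le]
  ring

lemma term_last (n : ℕ) :
    (2 * (n : ℝ) + 2) ^ 2 *
        (Real.Gamma ((n : ℝ) - n - 1/2) / Real.Gamma ((n : ℝ) - n + 1)) *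
          (Real.Gamma ((n : ℝ) + n + 3/2) / Real.Gamma ((n : ℝ) + n + 3))
      = π * (-2*((n:ℝ)+1)^2 * Cc (2*n+1)) / 16^n := by
  have e1 : (n : ℝ) - n - 1/2 = -(1/2) := by ring
  have e2 : (n : ℝ) - n + 1 = ((0:ℕ):ℝ) + 1 := by push_cast; ring
  have e3 : (n : ℝ) + n + 3/2 = ((2*n+1:ℕ):ℝ) + 1/2 := by push_cast; ring
  have e4 : (n : ℝ) + n + 3 = ((2*n+2:ℕ):ℝ) + 1 := by push_cast; ring
  rw [e1, e2, e3, e4, Gamma_neg_half, _root_.Gamma_nat_add_half,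
    Real.Gamma_nat_eq_factorial, Real.Gamma_nat_eq_factorial]
  have hcf : (Nat.factorial (2*(2*n+1)) : ℝ)
      = Cc (2*n+1) * Nat.factorial (2*n+1) * Nat.factorial (2*n+2) := cat_fact (2*n+1)
  rw [hcf]
  have hsq : Real.sqrt π * Real.sqrt π = π :=
    Real.mul_self_sqrt (le_of_lt Real.pi_pos)
  have hp : ((4:ℝ))^(2*n+1) = 4 * 16^n := by
    rw [pow_succ, pow_mul]; norm_num; ring
  have f1 : (Nat.factorial (2*n+1) : ℝ) ≠ 0 := by positivity
  have f2 : (Nat.factorial (2*n+2) : ℝ) ≠ 0 := by positivity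
  have p3 : ((16:ℝ))^n ≠ 0 := by positivity
  rw [Nat.factorial_zero, hp]
  field_simp
  ring_nf
  rw [Real.sq_sqrt Real.pi_pos.le]
  ring

theorem gamma_sum_identity_3 (n : ℕ) :
    ∑ i ∈ Finset.range (n + 1),
      (2 * (i : ℝ) + 2) ^ 2 *
        (Real.Gamma ((n : ℝ) - i - 1/2) / Real.Gamma ((n : ℝ) - i + 1)) *
          (Real.Gamma ((n : ℝ) + i + 3/2) / Real.Gamma ((n : ℝ) + i + 3)) =
      -2 * π := by
  rw [Finset.sum_range_succ]
  have hmain : ∑ i ∈ Finset.range n,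
      (2 * (i : ℝ) + 2) ^ 2 *
        (Real.Gamma ((n : ℝ) - i - 1/2) / Real.Gamma ((n : ℝ) - i + 1)) *
          (Real.Gamma ((n : ℝ) + i + 3/2) / Real.Gamma ((n : ℝ) + i + 3))
      = ∑ i ∈ Finset.range n, π * (4*((i:ℝ)+1)^2 * (Cc (n-1-i) * Cc (n+1+i))) / 16^n := by
    apply Finset.sum_congr rfl
    intro i hi
    exact term_eq n i (Finset.mem_range.mp hi)
  rw [hmain, term_last n]
  have hkey := keysum n
  have p3 : ((16:ℝ))^n ≠ 0 := by positivity
  rw [← Finset.sum_div, ← Finset.mul_sum]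
  have : ∑ i ∈ Finset.range n, 4*((i:ℝ)+1)^2 * (Cc (n-1-i) * Cc (n+1+i))
      = 2 * (((n:ℝ)+1)^2 * Cc (2*n+1) - 16^n) := by
    rw [← hkey]
    have h4 : ∑ i ∈ Finset.range n, 4*((i:ℝ)+1)^2 * (Cc (n-1-i) * Cc (n+1+i))
        = 4 * ∑ i ∈ Finset.range n, ((i:ℝ)+1)^2 * (Cc (n-1-i) * Cc (n+1+i)) := by
      rw [Finset.mul_sum]
      exact Finset.sum_congr rfl (fun i _ => by ring)
    rw [h4]; ring
  rw [this]
  field_simp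
  ring
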